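/- arXiv:1609.06295 — 3 statements merged into one kernel-verified Lean document; each statement's English description precedes it below -/
import Mathlib

section
/- For every positive integer $m$ and positive integer $k$, $\sum_{i=1}^{m} (m^2 - i^2)^k \leq \sqrt{\pi/(2k)} \cdot m^{2k+1}$. -/
open Real Finset

theorem stmt_0 (m k : ℕ) (hm : 0 < m) (hk : 0 < k) :
    ∑ i ∈ Finset.Icc 1 m, ((m : ℝ)^2 - (i : ℝ)^2)^k
      ≤ Real.sqrt (Real.pi / (2 * k)) * (m : ℝ)^(2 * k + 1) := by
  have hm' : (0:ℝ) < m := by exact_mod_cast hm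
  have hk' : (0:ℝ) < k := by exact_mod_cast hk
  set c : ℝ := k / (m:ℝ)^2 with hc
  have hcpos : 0 < c := by positivity
  set f : ℝ → ℝ := fun x => ((m:ℝ)^2 - x^2)^k with hf
  -- Step 1: sum ≤ ∫ 0..m f
  have hanti : AntitoneOn f (Set.Icc (0:ℝ) (0 + (m:ℕ))) := by
    intro x hx y hy hxy
    simp only [hf]
    apply pow_le_pow_left₀
    · nlinarith [hy.1, hy.2, hx.1, (by push_cast; linarith : ((0:ℝ) + (m:ℕ)) = (m:ℝ))]
    · nlinarith [hx.1, hy.1]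
  have h1 : ∑ i ∈ Finset.Icc 1 m, ((m : ℝ)^2 - (i : ℝ)^2)^k
      ≤ ∫ x in (0:ℝ)..(0 + (m:ℕ)), f x := by
    refine le_trans (le_of_eq ?_) (hanti.sum_le_integral)
    rw [show Finset.Icc 1 m = Finset.Ico 1 (m+1) by rw [Finset.Ico_add_one_right_eq_Icc],
      Finset.sum_Ico_eq_sum_range]
    simp [hf, add_comm]
  have hm0 : ((0:ℝ) + (m:ℕ)) = (m:ℝ) := by push_cast; ring
  rw [hm0] at h1
  -- Step 2: pointwise bound f ≤ m^(2k) * exp(-c x^2) on [0, m]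
  have hpt : ∀ x ∈ Set.Icc (0:ℝ) (m:ℝ), f x ≤ (m:ℝ)^(2*k) * Real.exp (-c * x^2) := by
    intro x hx
    have h1x : (m:ℝ)^2 - x^2 ≤ (m:ℝ)^2 * Real.exp (-(x^2/(m:ℝ)^2)) := by
      have := Real.add_one_le_exp (-(x^2/(m:ℝ)^2))
      have h2 : (m:ℝ)^2 * (1 - x^2/(m:ℝ)^2) = (m:ℝ)^2 - x^2 := by
        field_simp
      nlinarith [sq_nonneg (m:ℝ)]
    have hnn : 0 ≤ (m:ℝ)^2 - x^2 := by nlinarith [hx.1, hx.2]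
    calc f x = ((m:ℝ)^2 - x^2)^k := rfl
      _ ≤ ((m:ℝ)^2 * Real.exp (-(x^2/(m:ℝ)^2)))^k := pow_le_pow_left₀ hnn h1x k
      _ = (m:ℝ)^(2*k) * Real.exp (-c * x^2) := by
          rw [mul_pow, ← Real.exp_nat_mul, pow_mul]
          congr 1
          rw [hc]; field_simp
  have hintg : MeasureTheory.Integrable (fun x => (m:ℝ)^(2*k) * Real.exp (-c * x^2)) :=
    (integrable_exp_neg_mul_sq hcpos).const_mul _
  have h2 : ∫ x in (0:ℝ)..(m:ℝ), f x
      ≤ ∫ x in (0:ℝ)..(m:ℝ), (m:ℝ)^(2*k) * Real.exp (-c * x^2) := by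
    apply intervalIntegral.integral_mono_on hm'.le
    · have : ContinuousOn f (Set.uIcc (0:ℝ) (m:ℝ)) := by
        apply Continuous.continuousOn; simp only [hf]; continuity
      exact this.intervalIntegrable
    · exact hintg.intervalIntegrable
    · exact hpt
  -- Step 3: extend to Ioi 0 and compute Gaussian integral
  have h3 : ∫ x in (0:ℝ)..(m:ℝ), (m:ℝ)^(2*k) * Real.exp (-c * x^2)
      ≤ (m:ℝ)^(2*k) * (Real.sqrt (Real.pi / c) / 2) := by
    rw [intervalIntegral.integral_of_le hm'.le]
    have hsub : ∫ x in Set.Ioc (0:ℝ) (m:ℝ), (m:ℝ)^(2*k) * Real.exp (-c * x^2)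
        ≤ ∫ x in Set.Ioi (0:ℝ), (m:ℝ)^(2*k) * Real.exp (-c * x^2) := by
      apply MeasureTheory.setIntegral_mono_set hintg.integrableOn
      · filter_upwards with x using by positivity
      · exact Filter.Eventually.of_forall Set.Ioc_subset_Ioi_self
    refine hsub.trans (le_of_eq ?_)
    rw [MeasureTheory.integral_const_mul, integral_gaussian_Ioi]
  -- Step 4: arithmetic
  have h4 : (m:ℝ)^(2*k) * (Real.sqrt (Real.pi / c) / 2)
      ≤ Real.sqrt (Real.pi / (2 * k)) * (m : ℝ)^(2 * k + 1) := by
    have e1 : Real.sqrt (Real.pi / c) / 2 = Real.sqrt (Real.pi / c / 4) := by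
      rw [show (Real.pi / c / 4) = (Real.pi / c) * (1/2)^2 by ring,
        Real.sqrt_mul (by positivity), Real.sqrt_sq (by norm_num)]
      ring
    have e2 : (m:ℝ) * Real.sqrt (Real.pi / (2*(k:ℝ)))
        = Real.sqrt ((m:ℝ)^2 * (Real.pi / (2*(k:ℝ)))) := by
      rw [Real.sqrt_mul (by positivity), Real.sqrt_sq hm'.le]
    have e3 : Real.sqrt (Real.pi / c / 4) ≤ Real.sqrt ((m:ℝ)^2 * (Real.pi / (2*(k:ℝ)))) := by
      apply Real.sqrt_le_sqrt
      have : Real.pi / c / 4 = (m:ℝ)^2 * (Real.pi / (4*(k:ℝ))) := by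
        rw [hc]; field_simp
      rw [this]
      gcongr
      all_goals first | positivity | norm_num | linarith [Real.pi_pos]
    calc (m:ℝ)^(2*k) * (Real.sqrt (Real.pi / c) / 2)
        = (m:ℝ)^(2*k) * Real.sqrt (Real.pi / c / 4) := by rw [e1]
      _ ≤ (m:ℝ)^(2*k) * ((m:ℝ) * Real.sqrt (Real.pi / (2*(k:ℝ)))) := by
          rw [e2]; exact mul_le_mul_of_nonneg_left e3 (by positivity)
      _ = Real.sqrt (Real.pi / (2 * k)) * (m : ℝ)^(2 * k + 1) := by
          rw [pow_succ]; push_cast; ring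
  linarith
end

section
/- Let $T$ be a finite rooted tree where each node $v$ has an assigned nonnegative integer level $\ell(v)$ such that the level of every child is strictly smaller than the level of its parent. Define the weight of an edge from parent $u$ to a child as $2^{\ell(u)}$, and define $\mathrm{wt}(v)$ as the sum of the weights of all edges in the subtree rooted at $v$. If $T$ has at most $2n$ edges, then $\sum_{v \in T} \mathrm{wt}(v)/2^{\ell(v)} \leq 4n$. -/
/-- A finite rooted tree, modeled by a parent function: every node reaches the
root by iterating `parent`, and the root is its own parent. -/
structure FinRootedTree (V : Type*) [Fintype V] where
  root : V
  parent : V → V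
  parent_root : parent root = root
  reaches_root : ∀ v : V, ∃ n : ℕ, parent^[n] v = root

/-- `w` belongs to the subtree rooted at `v`. -/
def FinRootedTree.InSubtree {V : Type*} [Fintype V] (T : FinRootedTree V) (v w : V) : Prop :=
  ∃ n : ℕ, T.parent^[n] w = v

lemma geom_aux (S : Finset ℕ) (a : ℕ) (h : ∀ m ∈ S, a ≤ m) :
    ∑ m ∈ S, ((1:ℝ)/2)^m ≤ 2 * (1/2)^a := by
  have hS : S ⊆ Finset.Ico a (S.sup id + 1) := fun m hm =>
    Finset.mem_Ico.2 ⟨h m hm, Nat.lt_succ_of_le (Finset.le_sup (f := id) hm)⟩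
  have h1 : ∑ m ∈ S, ((1:ℝ)/2)^m ≤ ∑ m ∈ Finset.Ico a (S.sup id + 1), ((1:ℝ)/2)^m :=
    Finset.sum_le_sum_of_subset_of_nonneg hS (by intros; positivity)
  refine h1.trans ?_
  rw [Finset.sum_Ico_eq_sum_range]
  have : ∑ j ∈ Finset.range (S.sup id + 1 - a), ((1:ℝ)/2)^(a + j)
      = (1/2)^a * ∑ j ∈ Finset.range (S.sup id + 1 - a), ((1:ℝ)/2)^j := by
    rw [Finset.mul_sum]; exact Finset.sum_congr rfl fun j _ => pow_add _ _ _
  rw [this, mul_comm (2:ℝ)]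
  exact mul_le_mul_of_nonneg_left (sum_geometric_two_le _) (by positivity)

open Finset in
theorem stmt_4 {V : Type*} [Fintype V] [DecidableEq V] (T : FinRootedTree V)
    (ℓ : V → ℕ)
    -- the level of every non-root node is strictly smaller than that of its parent
    (hlevel : ∀ v : V, v ≠ T.root → ℓ v < ℓ (T.parent v))
    [∀ v w : V, Decidable (T.InSubtree v w)]
    -- `wt v`: sum of the weights `2 ^ ℓ(parent w)` of all edges (from `w` up to its
    -- parent) lying in the subtree rooted at `v`
    (wt : V → ℝ)
    (hwt : ∀ v : V, wt v =
      ∑ w ∈ Finset.univ.filter (fun w => T.InSubtree v w ∧ w ≠ v),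
        (2 : ℝ) ^ ℓ (T.parent w))
    (n : ℕ)
    -- the tree has at most `2 n` edges (one edge per non-root node)
    (hedges : Finset.card (Finset.univ.filter (fun w => w ≠ T.root)) ≤ 2 * n) :
    ∑ v : V, wt v / (2 : ℝ) ^ ℓ v ≤ 4 * n := by
  classical
  have hle : ∀ u : V, ℓ u ≤ ℓ (T.parent u) := by
    intro u
    by_cases hu : u = T.root
    · rw [hu, T.parent_root]
    · exact (hlevel u hu).le
  have hmono : ∀ (m : ℕ) (u : V), ℓ u ≤ ℓ (T.parent^[m] u) := by
    intro m u
    induction m with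
    | zero => simp
    | succ m ih =>
      rw [Function.iterate_succ_apply']
      exact ih.trans (hle _)
  have hstrict : ∀ (m : ℕ) (u : V), u ≠ T.root → 1 ≤ m → ℓ u < ℓ (T.parent^[m] u) := by
    intro m u hu hm
    obtain ⟨k, rfl⟩ := Nat.exists_eq_add_of_le hm
    rw [add_comm, Function.iterate_add_apply, Function.iterate_one]
    exact lt_of_lt_of_le (hlevel u hu) (hmono k (T.parent u))
  set A : V → Finset V := fun w => Finset.univ.filter (fun v => T.InSubtree v w ∧ w ≠ v) with hA
  have hinj : ∀ w : V, Set.InjOn ℓ (A w) := by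
    intro w v1 hv1 v2 hv2 heq
    simp only [hA, Finset.coe_filter, Set.mem_setOf_eq, Finset.mem_univ,
      true_and] at hv1 hv2
    obtain ⟨⟨j, hj⟩, -⟩ := hv1
    obtain ⟨⟨k, hk⟩, -⟩ := hv2
    have key : ∀ (j k : ℕ) (v1 v2 : V), j ≤ k → T.parent^[j] w = v1 →
        T.parent^[k] w = v2 → ℓ v1 = ℓ v2 → v1 = v2 := by
      intro j k v1 v2 hjk hj hk heq
      have hv2v1 : T.parent^[k - j] v1 = v2 := by
        rw [← hj, ← Function.iterate_add_apply, Nat.sub_add_cancel hjk, hk]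
      by_cases hr : v1 = T.root
      · rw [← hv2v1, hr, Function.iterate_fixed T.parent_root]
      · rcases Nat.eq_zero_or_pos (k - j) with h0 | h1
        · rw [← hv2v1, h0, Function.iterate_zero_apply]
        · exact absurd heq (by rw [← hv2v1]; exact (hstrict (k - j) v1 hr h1).ne)
    rcases le_total j k with h | h
    · exact key j k v1 v2 h hj hk heq
    · exact (key k j v2 v1 h hk hj heq.symm).symm
  have hlow : ∀ w : V, ∀ v ∈ A w, ℓ (T.parent w) ≤ ℓ v := by
    intro w v hv
    simp only [hA, Finset.mem_filter, Finset.mem_univ, true_and] at hv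
    obtain ⟨⟨j, hj⟩, hne⟩ := hv
    rcases Nat.eq_zero_or_pos j with rfl | hj1
    · exact absurd (by simpa using hj) hne
    obtain ⟨k, rfl⟩ := Nat.exists_eq_add_of_le hj1
    rw [add_comm, Function.iterate_add_apply, Function.iterate_one] at hj
    rw [← hj]
    exact hmono k (T.parent w)
  have hinner : ∀ w : V, ∑ v ∈ A w, (2:ℝ) ^ ℓ (T.parent w) / 2 ^ ℓ v ≤ 2 := by
    intro w
    have h1 : ∀ v : V, (2:ℝ) ^ ℓ (T.parent w) / 2 ^ ℓ v
        = (2:ℝ) ^ ℓ (T.parent w) * ((1:ℝ)/2) ^ ℓ v := by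
      intro v; rw [div_pow, one_pow, div_eq_mul_inv, div_eq_mul_inv, one_mul]
    calc ∑ v ∈ A w, (2:ℝ) ^ ℓ (T.parent w) / 2 ^ ℓ v
        = (2:ℝ) ^ ℓ (T.parent w) * ∑ v ∈ A w, ((1:ℝ)/2) ^ ℓ v := by
          rw [Finset.mul_sum]; exact Finset.sum_congr rfl fun v _ => h1 v
      _ = (2:ℝ) ^ ℓ (T.parent w) * ∑ m ∈ (A w).image ℓ, ((1:ℝ)/2) ^ m := by
          rw [Finset.sum_image (fun a ha b hb => hinj w ha hb)]
      _ ≤ (2:ℝ) ^ ℓ (T.parent w) * (2 * (1/2) ^ ℓ (T.parent w)) := by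
          refine mul_le_mul_of_nonneg_left ?_ (by positivity)
          refine geom_aux _ _ ?_
          intro m hm
          obtain ⟨v, hv, rfl⟩ := Finset.mem_image.1 hm
          exact hlow w v hv
      _ = 2 := by
          have hp : ((2:ℝ) ^ ℓ (T.parent w)) ≠ 0 := by positivity
          rw [one_div, inv_pow, mul_comm (2:ℝ) ((2:ℝ) ^ ℓ (T.parent w))⁻¹,
            ← mul_assoc, mul_inv_cancel₀ hp, one_mul]
  have hroot : ∀ w : V, w = T.root → A w = ∅ := by
    intro w hw
    rw [Finset.eq_empty_iff_forall_notMem]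
    intro v hv
    simp only [hA, Finset.mem_filter, Finset.mem_univ, true_and] at hv
    obtain ⟨⟨j, hj⟩, hne⟩ := hv
    exact hne (by rw [← hj, hw, Function.iterate_fixed T.parent_root])
  have hswap : ∑ v : V, wt v / (2:ℝ) ^ ℓ v
      = ∑ w : V, ∑ v ∈ A w, (2:ℝ) ^ ℓ (T.parent w) / 2 ^ ℓ v := by
    have key : ∀ v : V, wt v / (2:ℝ) ^ ℓ v
        = ∑ w : V, if T.InSubtree v w ∧ w ≠ v then (2:ℝ) ^ ℓ (T.parent w) / 2 ^ ℓ v else 0 := by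
      intro v
      rw [hwt v, Finset.sum_div, Finset.sum_filter]
    rw [Finset.sum_congr rfl fun v _ => key v, Finset.sum_comm]
    exact Finset.sum_congr rfl fun w _ => by rw [Finset.sum_filter]
  rw [hswap]
  calc ∑ w : V, ∑ v ∈ A w, (2:ℝ) ^ ℓ (T.parent w) / 2 ^ ℓ v
      = ∑ w ∈ Finset.univ.filter (fun w => w ≠ T.root),
          ∑ v ∈ A w, (2:ℝ) ^ ℓ (T.parent w) / 2 ^ ℓ v := by
        symm
        apply Finset.sum_filter_of_ne
        intro w _ hne hw
        rw [hroot w hw, Finset.sum_empty] at hne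
        exact hne rfl
    _ ≤ ∑ w ∈ Finset.univ.filter (fun w => w ≠ T.root), (2:ℝ) :=
        Finset.sum_le_sum fun w _ => hinner w
    _ = 2 * (Finset.univ.filter (fun w => w ≠ T.root)).card := by
        rw [Finset.sum_const, nsmul_eq_mul, mul_comm]
    _ ≤ 2 * (2 * n) :=
        mul_le_mul_of_nonneg_left (by exact_mod_cast hedges) (by norm_num : (0:ℝ) ≤ 2)
    _ = 4 * n := by ring
end

section
/- Fix $\epsilon \in (0,1/2]$ with $k = 1/\epsilon^2 \in \mathbb{N}$, $k \le n$. Let $a, a' \in \{0,1\}^n$ be two distinct vectors each with exactly $k$ ones. Then there exists an index $i$ such that the two distances $\|\frac{1}{\sqrt k} a - e_i\|_2$ and $\|\frac{1}{\sqrt k} a' - e_i\|_2$ differ by a multiplicative factor of more than $(1 + \epsilon/4)$: specifically, one of them equals $\sqrt{2}$ and the other equals $\sqrt{2 - 2\epsilon}$, and $\sqrt{2}/\sqrt{2-2\epsilon} > 1 + \epsilon/4$. -/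
open Real

lemma stmt_10_aux (n k : ℕ) (ε : ℝ) (hε0 : 0 < ε)
    (hk : (k : ℝ) = 1 / ε ^ 2)
    (b : EuclideanSpace ℝ (Fin n))
    (hb : ∀ j, b j = 0 ∨ b j = 1)
    (hc : (Finset.univ.filter (fun j => b j = 1)).card = k) (i : Fin n) :
    ‖(1 / Real.sqrt k) • b - EuclideanSpace.single i (1 : ℝ)‖ =
      Real.sqrt (2 - 2 * ε * b i) := by
  have hsk : Real.sqrt k = 1 / ε := by
    rw [hk]
    rw [show (1 : ℝ) / ε ^ 2 = (1 / ε) ^ 2 by field_simp]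
    exact Real.sqrt_sq (by positivity)
  have hinv : (1 : ℝ) / Real.sqrt k = ε := by
    rw [hsk]; field_simp
  have hsum : ∑ j, (b j) ^ 2 = (k : ℝ) := by
    calc ∑ j, (b j) ^ 2 = ∑ j, (if b j = 1 then (1 : ℝ) else 0) :=
          Finset.sum_congr rfl (fun j _ => by rcases hb j with h | h <;> simp [h])
      _ = ((Finset.univ.filter (fun j => b j = 1)).card : ℝ) := by
          simp [Finset.sum_boole]
      _ = (k : ℝ) := by rw [hc]
  rw [EuclideanSpace.norm_eq, hinv]
  congr 1
  have entry : ∀ j : Fin n, ((ε • b - EuclideanSpace.single i (1 : ℝ)) j)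
      = ε * b j - (if j = i then (1 : ℝ) else 0) := by
    intro j
    simp [EuclideanSpace.single_apply]
  have expand : ∀ j : Fin n,
      (ε * b j - (if j = i then (1 : ℝ) else 0)) ^ 2
        = ε ^ 2 * (b j) ^ 2 - 2 * ε * (if j = i then b j else 0)
          + (if j = i then (1 : ℝ) else 0) := by
    intro j; split <;> ring
  calc ∑ j, ‖(ε • b - EuclideanSpace.single i (1 : ℝ)) j‖ ^ 2
      = ∑ j, (ε * b j - (if j = i then (1 : ℝ) else 0)) ^ 2 := by
        refine Finset.sum_congr rfl fun j _ => ?_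
        rw [entry j, Real.norm_eq_abs, sq_abs]
    _ = ∑ j, (ε ^ 2 * (b j) ^ 2 - 2 * ε * (if j = i then b j else 0)
          + (if j = i then (1 : ℝ) else 0)) :=
        Finset.sum_congr rfl fun j _ => expand j
    _ = ε ^ 2 * (k : ℝ) - 2 * ε * b i + 1 := by
        rw [Finset.sum_add_distrib, Finset.sum_sub_distrib, ← Finset.mul_sum, hsum,
          ← Finset.mul_sum]
        simp
    _ = 2 - 2 * ε * b i := by
        rw [hk]; field_simp; ring

theorem stmt_10 (n k : ℕ) (ε : ℝ) (hε0 : 0 < ε) (hε : ε ≤ 1 / 2)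
    (hk : (k : ℝ) = 1 / ε ^ 2) (hkn : k ≤ n)
    (a a' : EuclideanSpace ℝ (Fin n))
    (ha01 : ∀ j, a j = 0 ∨ a j = 1) (ha'01 : ∀ j, a' j = 0 ∨ a' j = 1)
    (hsparse : (Finset.univ.filter (fun j => a j = 1)).card = k)
    (hsparse' : (Finset.univ.filter (fun j => a' j = 1)).card = k)
    (hne : a ≠ a') :
    ∃ i : Fin n,
      ((‖(1 / Real.sqrt k) • a - EuclideanSpace.single i (1 : ℝ)‖ = Real.sqrt 2 ∧
        ‖(1 / Real.sqrt k) • a' - EuclideanSpace.single i (1 : ℝ)‖ = Real.sqrt (2 - 2 * ε)) ∨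
       (‖(1 / Real.sqrt k) • a - EuclideanSpace.single i (1 : ℝ)‖ = Real.sqrt (2 - 2 * ε) ∧
        ‖(1 / Real.sqrt k) • a' - EuclideanSpace.single i (1 : ℝ)‖ = Real.sqrt 2)) ∧
      Real.sqrt 2 / Real.sqrt (2 - 2 * ε) > 1 + ε / 4 := by
  have h2 : (0 : ℝ) < 2 - 2 * ε := by linarith
  have key : Real.sqrt 2 / Real.sqrt (2 - 2 * ε) > 1 + ε / 4 := by
    rw [gt_iff_lt, lt_div_iff₀ (Real.sqrt_pos.2 h2)]
    have heq : (1 + ε / 4) * Real.sqrt (2 - 2 * ε)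
        = Real.sqrt ((1 + ε / 4) ^ 2 * (2 - 2 * ε)) := by
      rw [Real.sqrt_mul (by positivity), Real.sqrt_sq (by positivity)]
    rw [heq]
    apply Real.sqrt_lt_sqrt (by positivity)
    nlinarith [sq_nonneg ε, hε0.le]
  obtain ⟨i, hi⟩ : ∃ i, a i ≠ a' i := by
    by_contra h
    push_neg at h
    exact hne (PiLp.ext h)
  have hA := stmt_10_aux n k ε hε0 hk a ha01 hsparse i
  have hA' := stmt_10_aux n k ε hε0 hk a' ha'01 hsparse' i
  refine ⟨i, ?_, key⟩
  rcases ha01 i with h1 | h1 <;> rcases ha'01 i with h2' | h2'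
  · exact absurd (h1.trans h2'.symm) hi
  · left
    rw [h1] at hA; rw [h2'] at hA'
    constructor
    · rw [hA]; norm_num
    · rw [hA']; norm_num
  · right
    rw [h1] at hA; rw [h2'] at hA'
    constructor
    · rw [hA]; norm_num
    · rw [hA']; norm_num
  · exact absurd (h1.trans h2'.symm) hi
end
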